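/- For every real number q with 0<q<1, every integer n≥1 and every λ∈ℂ with |λ|=1, the operators of the representation π_λ on ℓ²(ℕⁿ) satisfy the sphere relation Σ_{i=1}^{n+1} π_λ(Y_i)* π_λ(Y_i) = 1 (the identity operator on ℓ²(ℕⁿ)). -/

import Mathlib

open ContinuousLinearMap

noncomputable section

abbrev lpH (n : ℕ) : Type := lp (fun _ : Fin n → ℕ => ℂ) 2

def basisE {n : ℕ} (k : Fin n → ℕ) : lpH n := lp.single 2 k 1

section Aux

local notation "⟪" x ", " y "⟫" => @inner ℂ _ _ x y

lemma inner_basisE_left {n : ℕ} (k : Fin n → ℕ) (f : lpH n) : ⟪basisE k, f⟫ = f k := by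
  rw [basisE, lp.inner_single_left]
  simp [RCLike.inner_apply]

lemma basisE_apply {n : ℕ} (k l : Fin n → ℕ) :
    (basisE k : ∀ _ : Fin n → ℕ, ℂ) l = if l = k then 1 else 0 := by
  rw [basisE, lp.single_apply]
  by_cases h : l = k <;> simp [h]

lemma inner_basisE_basisE {n : ℕ} (k l : Fin n → ℕ) :
    ⟪basisE k, basisE l⟫ = if l = k then 1 else 0 := by
  rw [inner_basisE_left, basisE_apply]
  exact if_congr eq_comm rfl rfl

lemma tele_aux (q : ℝ) (n : ℕ) (hn : 1 ≤ n) (a : ℕ → ℕ) :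
    (∑ m ∈ Finset.range n, q ^ (2 * ∑ j ∈ Finset.range m, a j) *
        (1 - q ^ ((if m + 1 = n then 4 else 2) * a m)))
      + q ^ (2 * ∑ j ∈ Finset.range n, a j + 2 * a (n - 1)) = 1 := by
  obtain ⟨m, rfl⟩ : ∃ m, n = m + 1 := ⟨n - 1, (Nat.succ_pred_eq_of_pos hn).symm⟩
  set T : ℕ → ℝ := fun j => q ^ (2 * ∑ i ∈ Finset.range j, a i) with hT
  have hTsucc : ∀ j, T (j + 1) = T j * q ^ (2 * a j) := by
    intro j
    simp only [hT, Finset.sum_range_succ, Nat.mul_add, pow_add]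
  rw [Finset.sum_range_succ]
  have h1 : ∀ j ∈ Finset.range m, q ^ (2 * ∑ i ∈ Finset.range j, a i) *
      (1 - q ^ ((if j + 1 = m + 1 then 4 else 2) * a j)) = T j - T (j + 1) := by
    intro j hj
    have hjm : j + 1 ≠ m + 1 := by
      have := Finset.mem_range.mp hj; omega
    rw [if_neg hjm, hTsucc, mul_sub, mul_one, mul_comm 2 (a j), pow_mul, ← pow_mul,
      mul_comm (a j) 2]
  rw [Finset.sum_congr rfl h1, Finset.sum_range_sub']
  have h2 : q ^ (2 * ∑ j ∈ Finset.range (m + 1), a j + 2 * a (m + 1 - 1))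
      = T m * q ^ (4 * a m) := by
    have he : 2 * ∑ j ∈ Finset.range (m + 1), a j + 2 * a (m + 1 - 1)
        = 2 * ∑ j ∈ Finset.range m, a j + 4 * a m := by
      rw [Finset.sum_range_succ, Nat.add_sub_cancel]; ring
    rw [he, pow_add]
  rw [if_pos rfl, h2]
  have : T 0 = 1 := by simp [hT]
  rw [this]; ring

lemma sum_Iio_fin {n : ℕ} (k : Fin n → ℕ) (i : Fin n) :
    ∑ j ∈ Finset.Iio i, k j
      = ∑ m ∈ Finset.range (i : ℕ), (fun m => if h : m < n then k ⟨m, h⟩ else 0) m := by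
  rw [← Nat.Iio_eq_range, ← Fin.map_valEmbedding_Iio, Finset.sum_map]
  apply Finset.sum_congr rfl
  intro j _
  simp [Fin.valEmbedding_apply, j.isLt]

end Aux

/-- A `Σ_q`-family: relations (R1)-(R5). Index `i : Fin (n+1)` corresponds to `Y_{i+1}`. -/
def IsSigmaQFamily (q : ℝ) {n : ℕ} {H : Type*} [NormedAddCommGroup H]
    [InnerProductSpace ℂ H] [CompleteSpace H]
    (Y : Fin (n + 1) → H →L[ℂ] H) : Prop :=
  (∀ i j : Fin (n + 1), j < i → ¬((i : ℕ) = n ∧ (j : ℕ) + 1 = n) →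
      Y i * Y j = ((q : ℂ))⁻¹ • (Y j * Y i) ∧
      adjoint (Y i) * Y j = ((q : ℂ))⁻¹ • (Y j * adjoint (Y i))) ∧
  (∀ j : Fin (n + 1), (j : ℕ) + 1 = n →
      Y (Fin.last n) * Y j = (((q : ℂ))⁻¹ ^ 2) • (Y j * Y (Fin.last n)) ∧
      adjoint (Y (Fin.last n)) * Y j = (((q : ℂ))⁻¹ ^ 2) • (Y j * adjoint (Y (Fin.last n)))) ∧
  (∀ i : Fin (n + 1), (i : ℕ) + 1 ≠ n →
      Y i * adjoint (Y i) - adjoint (Y i) * Y i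
        = ((1 - q ^ 2 : ℝ) : ℂ) • ∑ k ∈ Finset.Ioi i, adjoint (Y k) * Y k) ∧
  (∀ i : Fin (n + 1), (i : ℕ) + 1 = n →
      Y i * adjoint (Y i) - adjoint (Y i) * Y i
        = ((1 - q ^ 4 : ℝ) : ℂ) • (adjoint (Y (Fin.last n)) * Y (Fin.last n))) ∧
  (∑ i, adjoint (Y i) * Y i = 1)

/-- The representation `π_λ` on `ℓ²(ℕⁿ)`, described by its action on the canonical
orthonormal basis. Index `i : Fin n` (via `castSucc`) corresponds to `Y_{i+1}`,
and `Fin.last n` corresponds to `Y_{n+1}`. -/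
def IsPiRep (q : ℝ) {n : ℕ} (lam : ℂ) (Y : Fin (n + 1) → lpH n →L[ℂ] lpH n) : Prop :=
  (∀ i : Fin n, (i : ℕ) + 1 < n → ∀ k : Fin n → ℕ,
      Y i.castSucc (basisE k)
        = ((q ^ (∑ j ∈ Finset.Iio i, k j) * Real.sqrt (1 - q ^ (2 * k i)) : ℝ) : ℂ)
            • basisE (Function.update k i (k i - 1))) ∧
  (∀ i : Fin n, (i : ℕ) + 1 = n → ∀ k : Fin n → ℕ,
      Y i.castSucc (basisE k)
        = ((q ^ (∑ j ∈ Finset.Iio i, k j) * Real.sqrt (1 - q ^ (4 * k i)) : ℝ) : ℂ)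
            • basisE (Function.update k i (k i - 1))) ∧
  (∀ k : Fin n → ℕ,
      Y (Fin.last n) (basisE k)
        = (lam * (q : ℂ) ^ (∑ j : Fin n, if (j : ℕ) + 1 = n then 2 * k j else k j))
            • basisE k)

/-- Irreducibility: the only closed invariant subspaces are `⊥` and `⊤`. -/
def IsIrreducibleFamily {n : ℕ} {H : Type*} [NormedAddCommGroup H]
    [InnerProductSpace ℂ H] [CompleteSpace H]
    (Y : Fin (n + 1) → H →L[ℂ] H) : Prop :=
  ∀ V : Submodule ℂ H, IsClosed (V : Set H) →
    (∀ i : Fin (n + 1), ∀ v ∈ V, Y i v ∈ V ∧ adjoint (Y i) v ∈ V) →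
    V = ⊥ ∨ V = ⊤

section MainProof

local notation "⟪" x ", " y "⟫" => @inner ℂ _ _ x y

/-- The operators of `π_λ` satisfy the sphere relation `∑ᵢ Yᵢ* Yᵢ = 1`. -/
theorem piRep_sphere_relation (q : ℝ) (hq0 : 0 < q) (hq1 : q < 1) (n : ℕ) (hn : 1 ≤ n)
    (lam : ℂ) (hlam : ‖lam‖ = 1) (Y : Fin (n + 1) → lpH n →L[ℂ] lpH n)
    (hY : IsPiRep q lam Y) :
    ∑ i, adjoint (Y i) * Y i = 1 := by
  classical
  obtain ⟨hr1, hr2, hr3⟩ := hY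
  have hpow : ∀ m : ℕ, q ^ m ≤ 1 := fun m => pow_le_one₀ (le_of_lt hq0) (le_of_lt hq1)
  have hnn : ∀ m : ℕ, (0:ℝ) ≤ 1 - q ^ m := fun m => sub_nonneg.mpr (hpow m)
  set c : Fin n → (Fin n → ℕ) → ℝ := fun i k =>
    q ^ (∑ j ∈ Finset.Iio i, k j) *
      Real.sqrt (1 - q ^ ((if (i : ℕ) + 1 = n then 4 else 2) * k i)) with hc
  have hcast : ∀ (i : Fin n) (k : Fin n → ℕ),
      Y i.castSucc (basisE k) = ((c i k : ℝ) : ℂ) • basisE (Function.update k i (k i - 1)) := by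
    intro i k
    rcases eq_or_lt_of_le (Nat.succ_le_of_lt i.isLt) with h | h
    · have hck : c i k = q ^ (∑ j ∈ Finset.Iio i, k j) * Real.sqrt (1 - q ^ (4 * k i)) := by
        rw [hc]; simp only [if_pos h]
      rw [hr2 i h k, hck]
    · have hck : c i k = q ^ (∑ j ∈ Finset.Iio i, k j) * Real.sqrt (1 - q ^ (2 * k i)) := by
        rw [hc]; simp only [if_neg (Nat.ne_of_lt h)]
      rw [hr1 i h k, hck]
  have key : ∀ k, (∑ i, adjoint (Y i) * Y i) (basisE k) = basisE k := by
    intro k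
    refine lp.ext (funext fun l => ?_)
    have e1 : ((∑ i, adjoint (Y i) * Y i) (basisE k) : ∀ _ : Fin n → ℕ, ℂ) l
        = ⟪basisE l, (∑ i, adjoint (Y i) * Y i) (basisE k)⟫ :=
      (inner_basisE_left l _).symm
    have e2 : (basisE k : ∀ _ : Fin n → ℕ, ℂ) l = ⟪basisE l, basisE k⟫ :=
      (inner_basisE_left l _).symm
    rw [e1, e2, ContinuousLinearMap.sum_apply, inner_sum]
    simp only [ContinuousLinearMap.mul_apply, ContinuousLinearMap.adjoint_inner_right]
    rw [Fin.sum_univ_castSucc, inner_basisE_basisE]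
    by_cases hlk : k = l
    · subst hlk
      rw [if_pos rfl]
      have hterm : ∀ i : Fin n, ⟪Y i.castSucc (basisE k), Y i.castSucc (basisE k)⟫
          = ((c i k * c i k : ℝ) : ℂ) := by
        intro i
        rw [hcast, inner_smul_left, inner_smul_right, inner_basisE_basisE, if_pos rfl,
          Complex.conj_ofReal]
        push_cast; ring
      have hconj : (starRingEnd ℂ) lam * lam = 1 := by
        rw [mul_comm, Complex.mul_conj]
        norm_cast
        simp [Complex.normSq_eq_norm_sq, hlam]
      have hlast : ⟪Y (Fin.last n) (basisE k), Y (Fin.last n) (basisE k)⟫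
          = ((q ^ (2 * ∑ j : Fin n, if (j : ℕ) + 1 = n then 2 * k j else k j) : ℝ) : ℂ) := by
        rw [hr3, inner_smul_left, inner_smul_right, inner_basisE_basisE, if_pos rfl, mul_one,
          map_mul, map_pow, Complex.conj_ofReal]
        rw [mul_mul_mul_comm, hconj, one_mul]
        push_cast
        ring
      rw [Finset.sum_congr rfl (fun i _ => hterm i), hlast, ← Complex.ofReal_sum,
        ← Complex.ofReal_add]
      norm_cast
      -- now a real identity
      set a : ℕ → ℕ := fun m => if h : m < n then k ⟨m, h⟩ else 0 with ha
      have hci : ∀ i : Fin n, c i k * c i k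
          = q ^ (2 * ∑ j ∈ Finset.range (i:ℕ), a j)
            * (1 - q ^ ((if (i:ℕ) + 1 = n then 4 else 2) * a (i:ℕ))) := by
        intro i
        have hai : a (i:ℕ) = k i := by rw [ha]; simp
        rw [hc]
        simp only []
        rw [sum_Iio_fin k i, mul_mul_mul_comm,
          Real.mul_self_sqrt (hnn _), ← pow_add, hai, two_mul]
      have hS : (∑ j : Fin n, if (j : ℕ) + 1 = n then 2 * k j else k j)
          = (∑ j ∈ Finset.range n, a j) + a (n-1) := by
        have h1 : ∀ j : Fin n, (if (j : ℕ) + 1 = n then 2 * k j else k j)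
            = a (j:ℕ) + (if j = (⟨n-1, by omega⟩ : Fin n) then k j else 0) := by
          intro j
          have hai : a (j:ℕ) = k j := by rw [ha]; simp
          rcases eq_or_ne ((j:ℕ)+1) n with h | h
          · rw [if_pos h, if_pos (by ext; simp; omega), hai]; ring
          · rw [if_neg h, if_neg (by intro hj; apply h; rw [hj]; simp; omega), hai]; ring
        rw [Finset.sum_congr rfl (fun j _ => h1 j), Finset.sum_add_distrib]
        congr 1
        · exact Fin.sum_univ_eq_sum_range a n
        · rw [Finset.sum_ite_eq' Finset.univ (⟨n-1, by omega⟩ : Fin n) (fun j => k j),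
            if_pos (Finset.mem_univ _)]
          rw [ha]
          simp only []
          rw [dif_pos (by omega : n - 1 < n)]
      rw [Finset.sum_congr rfl (fun i _ => hci i), Fin.sum_univ_eq_sum_range
        (fun m => q ^ (2 * ∑ j ∈ Finset.range m, a j)
            * (1 - q ^ ((if m + 1 = n then 4 else 2) * a m))) n, hS,
        Nat.mul_add]
      exact tele_aux q n hn a
    · rw [if_neg hlk]
      have hlast0 : ⟪Y (Fin.last n) (basisE l), Y (Fin.last n) (basisE k)⟫ = 0 := by
        rw [hr3, hr3, inner_smul_left, inner_smul_right, inner_basisE_basisE, if_neg hlk]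
        ring
      have hterm0 : ∀ i : Fin n, ⟪Y i.castSucc (basisE l), Y i.castSucc (basisE k)⟫ = 0 := by
        intro i
        rw [hcast, hcast, inner_smul_left, inner_smul_right, inner_basisE_basisE]
        by_cases hu : Function.update k i (k i - 1) = Function.update l i (l i - 1)
        · rw [if_pos hu]
          have hne : l i ≠ k i := by
            intro h
            apply hlk
            funext j
            by_cases hj : j = i
            · subst hj; exact h.symm
            · have := congrFun hu j
              rwa [Function.update_of_ne hj, Function.update_of_ne hj] at this
          have hsub : k i - 1 = l i - 1 := by
            have := congrFun hu i
            rwa [Function.update_self, Function.update_self] at this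
          rcases (by omega : l i = 0 ∨ k i = 0) with h0 | h0
          · have hz : c i l = 0 := by rw [hc]; simp [h0]
            rw [hz]; simp
          · have hz : c i k = 0 := by rw [hc]; simp [h0]
            rw [hz]; simp
        · rw [if_neg hu]; ring
      rw [Finset.sum_congr rfl (fun i _ => hterm0 i), hlast0, Finset.sum_const_zero, add_zero]
  -- conclude by extending from the basis
  refine ContinuousLinearMap.ext fun v => ?_
  have hsingle : ∀ k : Fin n → ℕ,
      lp.single (E := fun _ : Fin n → ℕ => ℂ) 2 k (v k) = v k • basisE k := by
    intro k
    rw [basisE, ← lp.single_smul]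
    congr 1
    simp [smul_eq_mul]
  have hv : HasSum (fun k : Fin n → ℕ => lp.single 2 k (v k)) v :=
    lp.hasSum_single (by norm_num) v
  have h2 := hv.mapL (∑ i, adjoint (Y i) * Y i)
  simp only [hsingle, ContinuousLinearMap.map_smul, key] at h2
  have h3 : HasSum (fun k : Fin n → ℕ => v k • basisE k) v := by
    simpa only [hsingle] using hv
  rw [ContinuousLinearMap.one_apply]
  exact h2.unique h3

end MainProof
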